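/- Let X, B > 0, let x_1,…,x_n ∈ ℝ^d with ‖x_t‖₂ ≤ X, and let θ_1,…,θ_n ∈ ℝ^d with ‖θ_t‖₂ ≤ B. Suppose 1 = t_1 < ⋯ < t_{m+1} = n+1 are restart times such that for each batch j, Σ_{t=t_j}^{t_{j+1}−2} ‖θ_t − θ_{t+1}‖₁ ≤ C/m. Define θ̄_t := (1/(t_{j+1}−t_j)) Σ_{s=t_j}^{t_{j+1}−1} θ_s for t_j ≤ t < t_{j+1}. Then Σ_{t=1}^n (x_tᵀθ̄_t − x_tᵀθ_t)² ≤ X² n (C/m)² + 4 X² B² m. -/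

import Mathlib

open Finset

private lemma norm_le_l1 {d : ℕ} (v : EuclideanSpace ℝ (Fin d)) :
    ‖v‖ ≤ ∑ i, |v i| := by
  rw [EuclideanSpace.norm_eq]
  have h1 : ∑ i, ‖v i‖ ^ 2 ≤ (∑ i, |v i|) ^ 2 := by
    simpa [Real.norm_eq_abs] using
      Finset.sum_sq_le_sq_sum_of_nonneg (f := fun i => |v i|) (s := Finset.univ)
        (fun i _ => abs_nonneg _)
  calc Real.sqrt (∑ i, ‖v i‖ ^ 2) ≤ Real.sqrt ((∑ i, |v i|) ^ 2) := Real.sqrt_le_sqrt h1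
    _ = ∑ i, |v i| := Real.sqrt_sq (Finset.sum_nonneg fun i _ => abs_nonneg _)

theorem restart_approx_error_linear (n m d : ℕ) (X B C : ℝ)
    (hX : 0 < X) (hB : 0 < B) (hm : 1 ≤ m)
    (x θ θbar : ℕ → EuclideanSpace ℝ (Fin d))
    (t : ℕ → ℕ)
    (hx : ∀ s ∈ Finset.Icc 1 n, ‖x s‖ ≤ X)
    (hθ : ∀ s ∈ Finset.Icc 1 n, ‖θ s‖ ≤ B)
    (ht1 : t 1 = 1) (htm : t (m + 1) = n + 1)
    (hmono : ∀ j ∈ Finset.Icc 1 m, t j < t (j + 1))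
    (hTV : ∀ j ∈ Finset.Icc 1 m,
      ∑ s ∈ Finset.Ico (t j) (t (j + 1) - 1), ∑ i, |θ s i - θ (s + 1) i| ≤ C / m)
    (hbar : ∀ j ∈ Finset.Icc 1 m, ∀ s ∈ Finset.Ico (t j) (t (j + 1)),
      θbar s = (1 / ((t (j + 1) : ℝ) - t j)) • ∑ u ∈ Finset.Ico (t j) (t (j + 1)), θ u) :
    ∑ s ∈ Finset.Icc 1 n,
        (inner ℝ (x s) (θbar s) - inner ℝ (x s) (θ s) : ℝ) ^ 2
      ≤ X ^ 2 * n * (C / m) ^ 2 + 4 * X ^ 2 * B ^ 2 * m := by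
  have h1m : (1 : ℕ) ∈ Finset.Icc 1 m := by simp [hm]
  have hCm : 0 ≤ C / m :=
    le_trans (Finset.sum_nonneg fun s _ => Finset.sum_nonneg fun i _ => abs_nonneg _)
      (hTV 1 h1m)
  -- per-point bound
  have key : ∀ s ∈ Finset.Icc 1 n,
      (inner ℝ (x s) (θbar s) - inner ℝ (x s) (θ s) : ℝ) ^ 2 ≤ X ^ 2 * (C / m) ^ 2 := by
    intro s hs
    rw [Finset.mem_Icc] at hs
    -- find the batch containing s
    obtain ⟨j, hj, hsj⟩ : ∃ j ∈ Finset.Icc 1 m, s ∈ Finset.Ico (t j) (t (j + 1)) := by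
      set S : Finset ℕ := (Finset.Icc 1 m).filter (fun j => t j ≤ s) with hS
      have hne : S.Nonempty := ⟨1, by simp [hS, hm, ht1, hs.1]⟩
      refine ⟨S.max' hne, ?_, ?_⟩
      · exact (Finset.mem_filter.mp (S.max'_mem hne)).1
      · have hmem := Finset.mem_filter.mp (S.max'_mem hne)
        have hjm := Finset.mem_Icc.mp hmem.1
        refine Finset.mem_Ico.mpr ⟨hmem.2, ?_⟩
        by_contra hcon
        push_neg at hcon
        have hlt : S.max' hne < m := by
          rcases lt_or_eq_of_le hjm.2 with h | h
          · exact h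
          · exfalso
            have : t (S.max' hne + 1) = n + 1 := by rw [h, htm]
            omega
        have : S.max' hne + 1 ∈ S := by
          refine Finset.mem_filter.mpr ⟨Finset.mem_Icc.mpr ⟨by omega, by omega⟩, hcon⟩
        have := S.le_max' _ this
        omega
    rw [Finset.mem_Ico] at hsj
    have hjIcc := hj
    rw [Finset.mem_Icc] at hjIcc
    -- telescoping ℓ1 bound within the batch
    have tele : ∀ a b : ℕ, t j ≤ a → b < t (j + 1) → a ≤ b →
        ∑ i, |θ a i - θ b i| ≤ C / m := by
      intro a b ha hb hab
      calc ∑ i, |θ a i - θ b i|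
          ≤ ∑ i, ∑ v ∈ Finset.Ico a b, |θ v i - θ (v + 1) i| := by
            refine Finset.sum_le_sum fun i _ => ?_
            simpa [Real.dist_eq] using
              dist_le_Ico_sum_dist (f := fun v => θ v i) hab
        _ = ∑ v ∈ Finset.Ico a b, ∑ i, |θ v i - θ (v + 1) i| := Finset.sum_comm
        _ ≤ ∑ v ∈ Finset.Ico (t j) (t (j + 1) - 1), ∑ i, |θ v i - θ (v + 1) i| := by
            refine Finset.sum_le_sum_of_subset_of_nonneg ?_
              (fun v _ _ => Finset.sum_nonneg fun i _ => abs_nonneg _)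
            apply Finset.Ico_subset_Ico ha
            omega
        _ ≤ C / m := hTV j hj
    have hl1 : ∀ u ∈ Finset.Ico (t j) (t (j + 1)), ∑ i, |θ u i - θ s i| ≤ C / m := by
      intro u hu
      rw [Finset.mem_Ico] at hu
      rcases le_total u s with h | h
      · exact tele u s hu.1 hsj.2 h
      · calc ∑ i, |θ u i - θ s i| = ∑ i, |θ s i - θ u i| := by
              simp [abs_sub_comm]
          _ ≤ C / m := tele s u hsj.1 hu.2 h
    -- N and the average
    set N : ℝ := (t (j + 1) : ℝ) - t j with hN
    have hNnat : ((Finset.Ico (t j) (t (j + 1))).card : ℝ) = N := by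
      rw [Nat.card_Ico]
      have := hmono j hj
      push_cast [Nat.cast_sub (le_of_lt this)]
      ring
    have hNpos : 0 < N := by
      have := hmono j hj
      have : (t j : ℝ) < t (j + 1) := by exact_mod_cast this
      linarith
    have hbs := hbar j hj s (Finset.mem_Ico.mpr hsj)
    -- coordinatewise ℓ1 bound on θbar s - θ s
    have hdiff : ∑ i, |θbar s i - θ s i| ≤ C / m := by
      have hcoord : ∀ i, θbar s i - θ s i
          = (1 / N) * ∑ u ∈ Finset.Ico (t j) (t (j + 1)), (θ u i - θ s i) := by
        intro i
        have hsumA : (∑ u ∈ Finset.Ico (t j) (t (j + 1)), θ u) i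
            = ∑ u ∈ Finset.Ico (t j) (t (j + 1)), θ u i := by
          induction (Finset.Ico (t j) (t (j + 1))) using Finset.cons_induction with
          | empty => simp
          | cons a s' ha ih => rw [Finset.sum_cons, Finset.sum_cons, PiLp.add_apply, ih]
        rw [hbs, PiLp.smul_apply, smul_eq_mul, hsumA, Finset.sum_sub_distrib, mul_sub,
          Finset.sum_const, nsmul_eq_mul, hNnat]
        rw [← hN]
        field_simp
      calc ∑ i, |θbar s i - θ s i|
          ≤ ∑ i, (1 / N) * ∑ u ∈ Finset.Ico (t j) (t (j + 1)), |θ u i - θ s i| := by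
            refine Finset.sum_le_sum fun i _ => ?_
            rw [hcoord i, abs_mul, abs_of_nonneg (by positivity : (0:ℝ) ≤ 1 / N)]
            exact mul_le_mul_of_nonneg_left (Finset.abs_sum_le_sum_abs _ _) (by positivity)
        _ = (1 / N) * ∑ u ∈ Finset.Ico (t j) (t (j + 1)), ∑ i, |θ u i - θ s i| := by
            rw [← Finset.mul_sum, Finset.sum_comm]
        _ ≤ (1 / N) * (N * (C / m)) := by
            refine mul_le_mul_of_nonneg_left ?_ (by positivity)
            calc ∑ u ∈ Finset.Ico (t j) (t (j + 1)), ∑ i, |θ u i - θ s i|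
                ≤ ∑ u ∈ Finset.Ico (t j) (t (j + 1)), (C / m) :=
                  Finset.sum_le_sum hl1
              _ = N * (C / m) := by rw [Finset.sum_const, nsmul_eq_mul, hNnat]
        _ = C / m := by field_simp
    -- Cauchy–Schwarz + ℓ2 ≤ ℓ1
    have hinner : (inner ℝ (x s) (θbar s) - inner ℝ (x s) (θ s) : ℝ)
        = inner ℝ (x s) (θbar s - θ s) := (inner_sub_right _ _ _).symm
    have habs : |(inner ℝ (x s) (θbar s) - inner ℝ (x s) (θ s) : ℝ)| ≤ X * (C / m) := by
      rw [hinner]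
      calc |(inner ℝ (x s) (θbar s - θ s) : ℝ)| ≤ ‖x s‖ * ‖θbar s - θ s‖ :=
            abs_real_inner_le_norm _ _
        _ ≤ X * (C / m) := by
            refine mul_le_mul (hx s (Finset.mem_Icc.mpr hs)) ?_ (norm_nonneg _)
              (le_of_lt hX)
            calc ‖θbar s - θ s‖ ≤ ∑ i, |(θbar s - θ s) i| := norm_le_l1 _
              _ = ∑ i, |θbar s i - θ s i| := by simp [PiLp.sub_apply]
              _ ≤ C / m := hdiff
    calc (inner ℝ (x s) (θbar s) - inner ℝ (x s) (θ s) : ℝ) ^ 2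
        = |(inner ℝ (x s) (θbar s) - inner ℝ (x s) (θ s) : ℝ)| ^ 2 := (sq_abs _).symm
      _ ≤ (X * (C / m)) ^ 2 := by
          apply pow_le_pow_left₀ (abs_nonneg _) habs
      _ = X ^ 2 * (C / m) ^ 2 := by ring
  have hsum : ∑ s ∈ Finset.Icc 1 n,
      (inner ℝ (x s) (θbar s) - inner ℝ (x s) (θ s) : ℝ) ^ 2
      ≤ X ^ 2 * n * (C / m) ^ 2 := by
    calc ∑ s ∈ Finset.Icc 1 n, (inner ℝ (x s) (θbar s) - inner ℝ (x s) (θ s) : ℝ) ^ 2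
        ≤ (Finset.Icc 1 n).card • (X ^ 2 * (C / m) ^ 2) :=
          Finset.sum_le_card_nsmul _ _ _ key
      _ = X ^ 2 * n * (C / m) ^ 2 := by
          rw [Nat.card_Icc, nsmul_eq_mul]
          push_cast
          ring
  have hpos : 0 ≤ 4 * X ^ 2 * B ^ 2 * m := by positivity
  linarith
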